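/- Let p be a prime and L a normalized lattice such that either Q(L_p) ≠ 2ℤ_p, or p = 2 and s(L) = 2ℤ. Let σ: G → L be a representation of a lattice G by L. Then σ(Λ_{2p}(G)) = Λ_{2p}(σ(G)). Furthermore, if σ is a primitive representation, then σ(Λ_{2p}(G)) is a primitive sublattice of Λ_{2p}(L). -/

import Mathlib

open Matrix

namespace Paper

/-- The quadratic map attached to a Gram matrix `G` over a commutative ring. -/
def Qf {R : Type*} [CommRing R] {m : ℕ} (G : Matrix (Fin m) (Fin m) R) (x : Fin m → R) : R :=
  x ⬝ᵥ (G *ᵥ x)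

/-- The bilinear form attached to a Gram matrix `G`. -/
def Bf {R : Type*} [CommRing R] {m : ℕ} (G : Matrix (Fin m) (Fin m) R) (x y : Fin m → R) : R :=
  x ⬝ᵥ (G *ᵥ y)

/-- `G` is the Gram matrix of a positive definite integral `ℤ`-lattice. -/
def IsLat {m : ℕ} (G : Matrix (Fin m) (Fin m) ℤ) : Prop := G.IsSymm ∧ G.PosDef

/-- The lattice with Gram matrix `A` is represented by the lattice with Gram matrix `G`
(the representation is `x ↦ x ᵥ* T`). -/
def Rep {R : Type*} [CommRing R] {k m : ℕ} (A : Matrix (Fin k) (Fin k) R)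
    (G : Matrix (Fin m) (Fin m) R) : Prop :=
  ∃ T : Matrix (Fin k) (Fin m) R, A = T * G * Tᵀ

/-- Primitive representation: the image is a direct summand, i.e. the map `x ↦ x ᵥ* T`
admits a linear retraction. -/
def PrimRep {R : Type*} [CommRing R] {k m : ℕ} (A : Matrix (Fin k) (Fin k) R)
    (G : Matrix (Fin m) (Fin m) R) : Prop :=
  ∃ T : Matrix (Fin k) (Fin m) R, A = T * G * Tᵀ ∧
    ∃ U : Matrix (Fin m) (Fin k) R, T * U = 1

/-- The `p`-adic localization `L_p` of an integral matrix/lattice. -/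
noncomputable def padic (p : ℕ) [Fact p.Prime] {k m : ℕ} (A : Matrix (Fin k) (Fin m) ℤ) :
    Matrix (Fin k) (Fin m) ℤ_[p] := A.map (Int.cast : ℤ → ℤ_[p])

/-- Isometry of two Gram matrices over a commutative ring. -/
def Isom {R : Type*} [CommRing R] {m : ℕ} (A B : Matrix (Fin m) (Fin m) R) : Prop :=
  ∃ T : Matrix (Fin m) (Fin m) R, IsUnit T.det ∧ A = T * B * Tᵀ

/-- `G'` belongs to the genus of `G`. -/
def InGenus {m : ℕ} (G G' : Matrix (Fin m) (Fin m) ℤ) : Prop :=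
  IsLat G' ∧ ∀ (p : ℕ) [Fact p.Prime], Isom (padic p G') (padic p G)

/-- `A` is represented by the genus of `G`. -/
def GenusRep {k m : ℕ} (A : Matrix (Fin k) (Fin k) ℤ) (G : Matrix (Fin m) (Fin m) ℤ) : Prop :=
  ∃ G' : Matrix (Fin m) (Fin m) ℤ, InGenus G G' ∧ Rep A G'

/-- `A` is primitively represented by the genus of `G`. -/
def GenusPrimRep {k m : ℕ} (A : Matrix (Fin k) (Fin k) ℤ) (G : Matrix (Fin m) (Fin m) ℤ) : Prop :=
  ∃ G' : Matrix (Fin m) (Fin m) ℤ, InGenus G G' ∧ PrimRep A G'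

/-- `G` is an `n`-regular lattice. -/
def Regular (n : ℕ) {m : ℕ} (G : Matrix (Fin m) (Fin m) ℤ) : Prop :=
  ∀ A : Matrix (Fin n) (Fin n) ℤ, IsLat A → GenusRep A G → Rep A G

/-- `G` is a strictly `n`-regular lattice. -/
def StrictlyRegular (n : ℕ) {m : ℕ} (G : Matrix (Fin m) (Fin m) ℤ) : Prop :=
  ∀ A : Matrix (Fin n) (Fin n) ℤ, IsLat A → GenusPrimRep A G → PrimRep A G

/-- The `i`-th successive minimum of the lattice with Gram matrix `G`. -/
noncomputable def mu {m : ℕ} (G : Matrix (Fin m) (Fin m) ℤ) (i : ℕ) : ℕ :=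
  sInf {t : ℕ | ∃ v : Fin i → (Fin m → ℤ), LinearIndependent ℤ v ∧ ∀ j, Qf G (v j) ≤ (t : ℤ)}

/-- Two lattices are similar if one is isometric to a positive rational scaling of the other. -/
def Similar {m : ℕ} (G G' : Matrix (Fin m) (Fin m) ℤ) : Prop :=
  ∃ (r : ℚ) (T : Matrix (Fin m) (Fin m) ℤ), 0 < r ∧ IsUnit T.det ∧
    G'.map (Int.cast : ℤ → ℚ) = r • ((T * G * Tᵀ).map (Int.cast : ℤ → ℚ))

/-- The norm ideal `n(L)` of a lattice. -/
def NormIdeal {m : ℕ} (G : Matrix (Fin m) (Fin m) ℤ) : Ideal ℤ :=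
  Ideal.span (Set.range (Qf G))

/-- The scale ideal `s(L)` of a lattice. -/
def ScaleIdeal {m : ℕ} (G : Matrix (Fin m) (Fin m) ℤ) : Ideal ℤ :=
  Ideal.span {a : ℤ | ∃ i j, G i j = a}

/-- A lattice is normalized if its norm ideal is `2ℤ`. -/
def Normalized {m : ℕ} (G : Matrix (Fin m) (Fin m) ℤ) : Prop :=
  NormIdeal G = Ideal.span {(2 : ℤ)}

/-- The Watson sublattice `Λ_k(L)`, as a subset of the underlying module. -/
def Lambda {R : Type*} [CommRing R] (k : ℕ) {m : ℕ} (G : Matrix (Fin m) (Fin m) R) :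
    Set (Fin m → R) :=
  {x | ∀ z, (k : R) ∣ Qf G (x + z) - Qf G z}

/-- The Watson sublattice `Λ_k` of a sublattice `S` (with the quadratic map inherited
from the ambient Gram matrix `G`). -/
def LambdaIn {R : Type*} [CommRing R] (k : ℕ) {m : ℕ} (G : Matrix (Fin m) (Fin m) R)
    (S : Set (Fin m → R)) : Set (Fin m → R) :=
  {x ∈ S | ∀ z ∈ S, (k : R) ∣ Qf G (x + z) - Qf G z}

lemma Qf_add {R : Type*} [CommRing R] {m : ℕ} (G : Matrix (Fin m) (Fin m) R)
    (x z : Fin m → R) :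
    Qf G (x + z) = Qf G x + Qf G z + (x ⬝ᵥ (G *ᵥ z) + z ⬝ᵥ (G *ᵥ x)) := by
  simp [Qf, Matrix.mulVec_add, dotProduct_add, add_dotProduct]
  ring

lemma Qf_smul {R : Type*} [CommRing R] {m : ℕ} (G : Matrix (Fin m) (Fin m) R)
    (c : R) (x : Fin m → R) : Qf G (c • x) = c ^ 2 * Qf G x := by
  simp [Qf, Matrix.mulVec_smul, smul_dotProduct, dotProduct_smul, smul_eq_mul]
  ring

/-- The Watson sublattice `Λ_k(L)` as a `ℤ`-submodule. -/
def LambdaMod (k : ℕ) {m : ℕ} (G : Matrix (Fin m) (Fin m) ℤ) : Submodule ℤ (Fin m → ℤ) where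
  carrier := Lambda k G
  zero_mem' := by intro z; simp
  add_mem' := by
    intro x y hx hy z
    have h := dvd_add (hx (y + z)) (hy z)
    have e : Qf G (x + (y + z)) - Qf G (y + z) + (Qf G (y + z) - Qf G z)
        = Qf G (x + y + z) - Qf G z := by
      rw [add_assoc]; ring
    exact e ▸ h
  smul_mem' := by
    intro c x hx z
    have h0 : (k : ℤ) ∣ Qf G x := by simpa [Qf] using hx 0
    have hz : (k : ℤ) ∣ Qf G x + (x ⬝ᵥ (G *ᵥ z) + z ⬝ᵥ (G *ᵥ x)) := by
      have := hx z
      rwa [Qf_add, show Qf G x + Qf G z + (x ⬝ᵥ (G *ᵥ z) + z ⬝ᵥ (G *ᵥ x)) - Qf G z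
          = Qf G x + (x ⬝ᵥ (G *ᵥ z) + z ⬝ᵥ (G *ᵥ x)) by ring] at this
    have hcross : (k : ℤ) ∣ (x ⬝ᵥ (G *ᵥ z) + z ⬝ᵥ (G *ᵥ x)) := by
      simpa using dvd_sub hz h0
    have key : Qf G (c • x + z) - Qf G z
        = c ^ 2 * Qf G x + c * (x ⬝ᵥ (G *ᵥ z) + z ⬝ᵥ (G *ᵥ x)) := by
      have e1 : (c • x) ⬝ᵥ (G *ᵥ z) = c * (x ⬝ᵥ (G *ᵥ z)) := by
        rw [smul_dotProduct, smul_eq_mul]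
      have e2 : z ⬝ᵥ (G *ᵥ (c • x)) = c * (z ⬝ᵥ (G *ᵥ x)) := by
        rw [Matrix.mulVec_smul, dotProduct_smul, smul_eq_mul]
      rw [Qf_add, Qf_smul, e1, e2]
      ring
    rw [key]
    exact dvd_add (Dvd.dvd.mul_left h0 _) (Dvd.dvd.mul_left hcross c)

/-- The set of values of `Q` on `L_p` is all of `2ℤ_p`. -/
def QValuesFull (p : ℕ) [Fact p.Prime] {m : ℕ} (G : Matrix (Fin m) (Fin m) ℤ) : Prop :=
  Set.range (Qf (padic p G)) = {a : ℤ_[p] | (2 : ℤ_[p]) ∣ a}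

/-- One Watson step followed by scaling by `r`:
`G'` is a Gram matrix of the scaled lattice `Λ_{2p}^{(r)}(G)`. -/
def LambdaScaledStep (p : ℕ) (r : ℚ) {m : ℕ} (G G' : Matrix (Fin m) (Fin m) ℤ) : Prop :=
  ∃ T : Matrix (Fin m) (Fin m) ℤ, LinearIndependent ℤ (fun i => T i) ∧
    Submodule.span ℤ (Set.range T) = LambdaMod (2 * p) G ∧
    G'.map (Int.cast : ℤ → ℚ) = r • ((T * G * Tᵀ).map (Int.cast : ℤ → ℚ))

/-- An admissible chain of scaled Watson transformations at `p`, starting from `G`: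
every intermediate lattice is normalized. -/
def AdmissibleChain (p : ℕ) {m : ℕ} (G : Matrix (Fin m) (Fin m) ℤ) (l : ℕ)
    (rs : Fin l → ℚ) (Ls : Fin (l + 1) → Matrix (Fin m) (Fin m) ℤ) : Prop :=
  Ls 0 = G ∧ (∀ i, 0 < rs i) ∧
  ∀ i : Fin l, LambdaScaledStep p (rs i) (Ls i.castSucc) (Ls i.succ) ∧ Normalized (Ls i.succ)

/-- `L'_p` has an orthogonal direct summand isometric to the hyperbolic plane over `ℤ_p`. -/
def HypSplit (p : ℕ) [Fact p.Prime] {m : ℕ} (L' : Matrix (Fin m) (Fin m) ℤ) : Prop :=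
  ∃ (T : Matrix (Fin m) (Fin m) ℤ_[p]) (i0 i1 : Fin m), i0 ≠ i1 ∧ IsUnit T.det ∧
    (T * padic p L' * Tᵀ) i0 i0 = 0 ∧ (T * padic p L' * Tᵀ) i0 i1 = 1 ∧
    (T * padic p L' * Tᵀ) i1 i0 = 1 ∧ (T * padic p L' * Tᵀ) i1 i1 = 0 ∧
    ∀ j, j ≠ i0 → j ≠ i1 →
      (T * padic p L' * Tᵀ) i0 j = 0 ∧ (T * padic p L' * Tᵀ) i1 j = 0 ∧
      (T * padic p L' * Tᵀ) j i0 = 0 ∧ (T * padic p L' * Tᵀ) j i1 = 0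

/-- The conclusions of Corollary 3.5 for the final lattice `L'` of an admissible chain:
`L'` is a normalized strictly `n`-regular lattice, `Q(L'_p) = 2ℤ_p`, and for every prime
`q ≠ p` the lattice `L'_q` is isometric to a scaling of `G_q`. -/
def GoodTarget (n p : ℕ) [Fact p.Prime] {m : ℕ} (G L' : Matrix (Fin m) (Fin m) ℤ) : Prop :=
  IsLat L' ∧ Normalized L' ∧ StrictlyRegular n L' ∧ QValuesFull p L' ∧
  ∀ (q : ℕ) [Fact q.Prime], q ≠ p →
    ∃ (c : ℚ) (T : Matrix (Fin m) (Fin m) ℤ_[q]), 0 < c ∧ IsUnit T.det ∧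
      L'.map (Int.cast : ℤ → ℚ_[q])
        = (c : ℚ_[q]) • ((T * padic q G * Tᵀ).map ((↑) : ℤ_[q] → ℚ_[q]))


section Aux

open Polynomial

lemma dot_map {R S : Type*} [CommRing R] [CommRing S] {m : ℕ} (f : R →+* S)
    (G : Matrix (Fin m) (Fin m) R) (x y : Fin m → R) :
    (fun i => f (x i)) ⬝ᵥ (G.map f *ᵥ fun i => f (y i)) = f (x ⬝ᵥ (G *ᵥ y)) := by
  simp [dotProduct, Matrix.mulVec, Finset.mul_sum, map_sum, _root_.map_mul, Matrix.map]

lemma Qf_map {R S : Type*} [CommRing R] [CommRing S] {m : ℕ} (f : R →+* S)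
    (G : Matrix (Fin m) (Fin m) R) (x : Fin m → R) :
    Qf (G.map f) (fun i => f (x i)) = f (Qf G x) := dot_map f G x x

lemma dot_symm {R : Type*} [CommRing R] {m : ℕ} {G : Matrix (Fin m) (Fin m) R}
    (hG : G.IsSymm) (x y : Fin m → R) : x ⬝ᵥ (G *ᵥ y) = y ⬝ᵥ (G *ᵥ x) := by
  rw [Matrix.dotProduct_mulVec, ← Matrix.mulVec_transpose, hG, dotProduct_comm]

lemma normalized_dvd {m : ℕ} {G : Matrix (Fin m) (Fin m) ℤ} (hnorm : Normalized G)
    (w : Fin m → ℤ) : (2 : ℤ) ∣ Qf G w := by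
  rw [← Ideal.mem_span_singleton, ← hnorm]
  exact Ideal.subset_span ⟨w, rfl⟩

lemma even_values (p : ℕ) [hp : Fact p.Prime] {m : ℕ} {G : Matrix (Fin m) (Fin m) ℤ}
    (hnorm : Normalized G) (v : Fin m → ℤ_[p]) : (2 : ℤ_[p]) ∣ Qf (padic p G) v := by
  by_cases hp2 : p = 2
  · subst hp2
    have hker : PadicInt.toZMod (Qf (padic 2 G) v) = 0 := by
      have h1 : PadicInt.toZMod (Qf (padic 2 G) v)
          = Qf ((padic 2 G).map PadicInt.toZMod) (fun i => PadicInt.toZMod (v i)) :=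
        (Qf_map PadicInt.toZMod _ v).symm
      have h2 : (padic 2 G).map PadicInt.toZMod = G.map (Int.cast : ℤ → ZMod 2) := by
        ext i j
        simp only [padic, Matrix.map_apply]
        exact map_intCast (PadicInt.toZMod (p := 2)) (G i j)
      set w : Fin m → ℤ := fun i => ((PadicInt.toZMod (v i)).val : ℤ) with hw
      have h3 : (fun i => PadicInt.toZMod (v i)) = fun i => ((w i : ℤ) : ZMod 2) := by
        funext i
        push_cast [hw]
        exact ((ZMod.natCast_val _).trans (by simp)).symm
      have h4 : Qf (G.map (Int.cast : ℤ → ZMod 2)) (fun i => ((w i : ℤ) : ZMod 2))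
          = ((Qf G w : ℤ) : ZMod 2) := Qf_map (Int.castRingHom (ZMod 2)) G w
      rw [h1, h2, h3, h4]
      rw [ZMod.intCast_zmod_eq_zero_iff_dvd]
      exact normalized_dvd hnorm w
    have : Qf (padic 2 G) v ∈ RingHom.ker (PadicInt.toZMod (p := 2)) := hker
    rw [PadicInt.ker_toZMod, PadicInt.maximalIdeal_eq_span_p, Ideal.mem_span_singleton] at this
    exact_mod_cast this
  · have : IsUnit (2 : ℤ_[p]) := by
      rw [PadicInt.isUnit_iff]
      have h1 : ‖((2:ℤ) : ℤ_[p])‖ < 1 ↔ (p:ℤ) ∣ 2 := PadicInt.norm_int_lt_one_iff_dvd 2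
      have h2 : ¬ (p:ℤ) ∣ 2 := by
        intro h
        have : p ∣ 2 := by exact_mod_cast h
        exact hp2 ((Nat.prime_dvd_prime_iff_eq hp.out Nat.prime_two).mp this)
      have h3 : ‖((2:ℤ) : ℤ_[p])‖ ≤ 1 := PadicInt.norm_le_one _
      push_cast at h1 h3 ⊢
      rcases lt_or_eq_of_le h3 with h | h
      · exact absurd (h1.mp (by exact_mod_cast h)) h2
      · exact h
    exact this.dvd

lemma norm_p_lt_one (p : ℕ) [hp : Fact p.Prime] : ‖(p : ℤ_[p])‖ < 1 := by
  rw [PadicInt.norm_p]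
  rw [inv_lt_one_iff₀]
  right
  exact_mod_cast hp.out.one_lt

lemma represents_all (p : ℕ) [hp : Fact p.Prime] {m : ℕ} (Gp : Matrix (Fin m) (Fin m) ℤ_[p])
    (hsymm : ∀ x y : Fin m → ℤ_[p], x ⬝ᵥ (Gp *ᵥ y) = y ⬝ᵥ (Gp *ᵥ x))
    (heven : ∀ v, (2 : ℤ_[p]) ∣ Qf Gp v)
    (x z : Fin m → ℤ_[p]) (hx : (2 * (p : ℤ_[p])) ∣ Qf Gp x)
    (hb : ¬ (p : ℤ_[p]) ∣ x ⬝ᵥ (Gp *ᵥ z))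
    (t : ℤ_[p]) (ht : (2 : ℤ_[p]) ∣ t) : ∃ w, Qf Gp w = t := by
  obtain ⟨c', hc'⟩ := hx
  obtain ⟨d', hd'⟩ := heven z
  obtain ⟨s, hs⟩ := ht
  set b : ℤ_[p] := x ⬝ᵥ (Gp *ᵥ z) with hbdef
  have hbu : IsUnit b := by
    rw [PadicInt.isUnit_iff]
    refine le_antisymm (PadicInt.norm_le_one b) ?_
    rcases lt_or_eq_of_le (PadicInt.norm_le_one b) with h | h
    · exact absurd ((PadicInt.norm_lt_one_iff_dvd b).mp h) hb
    · exact le_of_eq h.symm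
  obtain ⟨u, hu⟩ := hbu
  set a0 : ℤ_[p] := (s - d') * ↑u⁻¹ with ha0
  set F : Polynomial ℤ_[p] := C ((p : ℤ_[p]) * c') * X ^ 2 + C b * X + C (d' - s) with hF
  have hba0 : b * a0 = s - d' := by
    rw [ha0, ← hu, ← mul_assoc, mul_comm (↑u : ℤ_[p]), mul_assoc]
    simp
  have hFeval : F.eval a0 = (p : ℤ_[p]) * (c' * a0 ^ 2) := by
    simp only [hF, eval_add, eval_mul, eval_C, eval_pow, eval_X]
    rw [hba0]; ring
  have hDeval : F.derivative.eval a0 = 2 * ((p : ℤ_[p]) * c') * a0 + b := by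
    simp only [hF, derivative_add, derivative_mul, derivative_C, derivative_X_pow, derivative_X,
      zero_mul, zero_add, mul_one, eval_add, eval_mul, eval_C, eval_X, eval_pow, eval_natCast,
      eval_zero]
    ring
  have hDnorm : ‖F.derivative.eval a0‖ = 1 := by
    rw [hDeval]
    have h1 : ‖2 * ((p : ℤ_[p]) * c') * a0‖ < 1 := by
      calc ‖2 * ((p : ℤ_[p]) * c') * a0‖ = ‖(p : ℤ_[p])‖ * ‖2 * c' * a0‖ := by
            rw [← norm_mul]; ring_nf
        _ ≤ ‖(p : ℤ_[p])‖ * 1 := by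
            exact mul_le_mul_of_nonneg_left (PadicInt.norm_le_one _) (norm_nonneg _)
        _ < 1 := by rw [mul_one]; exact norm_p_lt_one p
    have hb1 : ‖b‖ = 1 := PadicInt.isUnit_iff.mp ⟨u, hu⟩
    rw [PadicInt.norm_add_eq_max_of_ne (by rw [hb1]; exact ne_of_lt h1), hb1]
    exact max_eq_right h1.le
  have hlt : ‖F.eval a0‖ < ‖F.derivative.eval a0‖ ^ 2 := by
    rw [hDnorm, hFeval, one_pow]
    calc ‖(p : ℤ_[p]) * (c' * a0 ^ 2)‖ = ‖(p : ℤ_[p])‖ * ‖c' * a0 ^ 2‖ := norm_mul _ _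
      _ ≤ ‖(p : ℤ_[p])‖ * 1 := mul_le_mul_of_nonneg_left (PadicInt.norm_le_one _) (norm_nonneg _)
      _ < 1 := by rw [mul_one]; exact norm_p_lt_one p
  obtain ⟨r, hr, -⟩ := hensels_lemma hlt
  have hroot : (p : ℤ_[p]) * c' * r ^ 2 + b * r + (d' - s) = 0 := by
    simpa [hF] using hr
  refine ⟨r • x + z, ?_⟩
  rw [Qf_add, Qf_smul, hc', hd', hs]
  have e1 : (r • x) ⬝ᵥ (Gp *ᵥ z) = r * b := by
    rw [smul_dotProduct, hbdef, smul_eq_mul]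
  have e2 : z ⬝ᵥ (Gp *ᵥ (r • x)) = r * b := by
    rw [Matrix.mulVec_smul, dotProduct_smul, smul_eq_mul, hsymm z x, hbdef]
  rw [e1, e2]
  linear_combination 2 * hroot

lemma qvaluesfull_of_bad (p : ℕ) [Fact p.Prime] {m : ℕ} {G : Matrix (Fin m) (Fin m) ℤ}
    (hsym : G.IsSymm) (hnorm : Normalized G) (x z : Fin m → ℤ)
    (hx : (2 * (p : ℤ)) ∣ Qf G x) (hb : ¬ ((p : ℤ) ∣ x ⬝ᵥ (G *ᵥ z))) :
    QValuesFull p G := by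
  have hpsym : (padic p G).IsSymm := by
    unfold Matrix.IsSymm padic
    rw [← Matrix.transpose_map, hsym]
  have hcast : ∀ v : Fin m → ℤ,
      Qf (padic p G) (fun i => ((v i : ℤ) : ℤ_[p])) = ((Qf G v : ℤ) : ℤ_[p]) := by
    intro v
    exact Qf_map (Int.castRingHom ℤ_[p]) G v
  ext a
  constructor
  · rintro ⟨v, rfl⟩
    exact even_values p hnorm v
  · intro ha
    have hdotcast : (fun i => ((x i : ℤ) : ℤ_[p])) ⬝ᵥ ((padic p G) *ᵥ fun i => ((z i : ℤ) : ℤ_[p]))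
        = (((x ⬝ᵥ (G *ᵥ z)) : ℤ) : ℤ_[p]) := dot_map (Int.castRingHom ℤ_[p]) G x z
    refine represents_all p (padic p G) (fun x y => dot_symm hpsym x y)
      (fun v => even_values p hnorm v) (fun i => ((x i : ℤ) : ℤ_[p]))
      (fun i => ((z i : ℤ) : ℤ_[p])) ?_ ?_ a ha
    · rw [hcast x]
      obtain ⟨c, hc⟩ := hx
      refine ⟨((c : ℤ) : ℤ_[p]), ?_⟩
      rw [hc]; push_cast; ring
    · rw [hdotcast]
      intro hdvd
      apply hb
      rw [← PadicInt.norm_int_lt_one_iff_dvd]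
      exact (PadicInt.norm_lt_one_iff_dvd _).mpr hdvd

lemma dvd_mem_lambda (p : ℕ) [Fact p.Prime] {m : ℕ} {G : Matrix (Fin m) (Fin m) ℤ}
    (hG : IsLat G) (hnorm : Normalized G)
    (hcond : ¬ QValuesFull p G ∨ (p = 2 ∧ ScaleIdeal G = Ideal.span {(2 : ℤ)}))
    (x : Fin m → ℤ) (hx : ((2 * p : ℕ) : ℤ) ∣ Qf G x) : x ∈ Lambda (2 * p) G := by
  intro z
  have hsym := hG.1
  have hexp : Qf G (x + z) - Qf G z = Qf G x + 2 * (x ⬝ᵥ (G *ᵥ z)) := by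
    rw [Qf_add, dot_symm hsym z x]; ring
  have hcast : ((2 * p : ℕ) : ℤ) = 2 * (p : ℤ) := by push_cast; ring
  rw [hexp]
  rw [hcast] at hx ⊢
  refine dvd_add hx ?_
  rcases hcond with h | ⟨hp2, hscale⟩
  · have hpb : (p : ℤ) ∣ x ⬝ᵥ (G *ᵥ z) := by
      by_contra hbc
      exact h (qvaluesfull_of_bad p hsym hnorm x z hx hbc)
    exact mul_dvd_mul_left 2 hpb
  · subst hp2
    have hent : ∀ i j, (2 : ℤ) ∣ G i j := by
      intro i j
      rw [← Ideal.mem_span_singleton, ← hscale]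
      exact Ideal.subset_span ⟨i, j, rfl⟩
    have h2b : (2 : ℤ) ∣ x ⬝ᵥ (G *ᵥ z) := by
      simp only [dotProduct, Matrix.mulVec]
      refine Finset.dvd_sum fun i _ => Dvd.dvd.mul_left ?_ (x i)
      exact Finset.dvd_sum fun j _ => (hent i j).mul_right (z j)
    have : (2 * (2 : ℤ)) ∣ 2 * (x ⬝ᵥ (G *ᵥ z)) := mul_dvd_mul_left 2 h2b
    exact_mod_cast this

end Aux

/-- for a representation `σ : G → L` (given by `x ↦ x ᵥ* T`),
`σ(Λ_{2p}(G)) = Λ_{2p}(σ(G))`; if moreover `σ` is primitive, then `σ(Λ_{2p}(G))` is a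
primitive sublattice (direct summand) of `Λ_{2p}(L)`. -/
theorem lambda_of_representation (p : ℕ) [Fact p.Prime] {k m : ℕ}
    (G : Matrix (Fin m) (Fin m) ℤ) (hG : IsLat G) (hnorm : Normalized G)
    (hcond : ¬ QValuesFull p G ∨ (p = 2 ∧ ScaleIdeal G = Ideal.span {(2 : ℤ)}))
    (A : Matrix (Fin k) (Fin k) ℤ) (hA : IsLat A)
    (T : Matrix (Fin k) (Fin m) ℤ) (hT : A = T * G * Tᵀ) :
    ((fun x => Matrix.vecMul x T) '' Lambda (2 * p) A
        = LambdaIn (2 * p) G (Set.range fun x => Matrix.vecMul x T))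
    ∧ ((∃ U : Matrix (Fin m) (Fin k) ℤ, T * U = 1) →
        ∃ C : Submodule ℤ (Fin m → ℤ),
          (Submodule.map T.vecMulLinear (LambdaMod (2 * p) A)) ⊓ C = ⊥ ∧
          (Submodule.map T.vecMulLinear (LambdaMod (2 * p) A)) ⊔ C
            = LambdaMod (2 * p) G) := by
  -- Q transfers along the representation
  have hQrep : ∀ a : Fin k → ℤ, Qf A a = Qf G (Matrix.vecMul a T) := by
    intro a
    simp only [Qf, hT]
    rw [← Matrix.mulVec_mulVec, ← Matrix.mulVec_mulVec, Matrix.mulVec_transpose,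
      Matrix.dotProduct_mulVec]
  have hmem_of_dvd : ∀ x : Fin m → ℤ, ((2 * p : ℕ) : ℤ) ∣ Qf G x → x ∈ Lambda (2 * p) G :=
    fun x hx => dvd_mem_lambda p hG hnorm hcond x hx
  -- the LambdaIn condition for an image vector transfers to Lambda of A
  have htrans : ∀ a c : Fin k → ℤ,
      Qf G (Matrix.vecMul a T + Matrix.vecMul c T) - Qf G (Matrix.vecMul c T)
        = Qf A (a + c) - Qf A c := by
    intro a c
    rw [← Matrix.add_vecMul, ← hQrep, ← hQrep]
  constructor
  · ext x
    constructor
    · rintro ⟨a, ha, rfl⟩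
      refine ⟨⟨a, rfl⟩, ?_⟩
      rintro w ⟨c, rfl⟩
      rw [htrans a c]
      exact ha c
    · rintro ⟨⟨a, rfl⟩, hcond2⟩
      refine ⟨a, fun c => ?_, rfl⟩
      have := hcond2 (Matrix.vecMul c T) ⟨c, rfl⟩
      rwa [htrans a c] at this
  · rintro ⟨U, hU⟩
    set Λ : Submodule ℤ (Fin m → ℤ) := LambdaMod (2 * p) G with hΛ
    set M : Submodule ℤ (Fin m → ℤ) := Submodule.map T.vecMulLinear (LambdaMod (2 * p) A)
      with hM
    have hdvdQ : ∀ a : Fin k → ℤ, a ∈ LambdaMod (2 * p) A → ((2 * p : ℕ) : ℤ) ∣ Qf A a := by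
      intro a ha
      have h0 := ha 0
      simpa [Qf] using h0
    have hML : M ≤ Λ := by
      rintro _ ⟨a, ha, rfl⟩
      rw [Matrix.vecMulLinear_apply]
      exact hmem_of_dvd _ (by rw [← hQrep]; exact hdvdQ a ha)
    have hrangeM : ∀ y : Fin m → ℤ, y ∈ Λ → ∀ b : Fin k → ℤ,
        y = Matrix.vecMul b T → y ∈ M := by
      intro y hy b hyb
      refine ⟨b, ?_, by rw [Matrix.vecMulLinear_apply, hyb]⟩
      intro c
      have := hy (Matrix.vecMul c T)
      rw [← htrans b c, ← hyb]
      exact this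
    set M' : Submodule ℤ Λ := M.comap Λ.subtype with hM'
    haveI hNZ : NoZeroSMulDivisors ℤ (↥Λ ⧸ M') := by
      refine ⟨fun {c xq} hcx => ?_⟩
      obtain ⟨y, rfl⟩ := Submodule.Quotient.mk_surjective M' xq
      by_cases hc : c = 0
      · exact Or.inl hc
      · right
        rw [← Submodule.Quotient.mk_smul, Submodule.Quotient.mk_eq_zero] at hcx
        rw [Submodule.Quotient.mk_eq_zero]
        have hcy : (c • (y : Fin m → ℤ)) ∈ M := hcx
        obtain ⟨a, ha, haeq⟩ := hcy
        rw [Matrix.vecMulLinear_apply] at haeq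
        set b : Fin k → ℤ := Matrix.vecMul (y : Fin m → ℤ) U with hb
        have hab : a = c • b := by
          have h1 : Matrix.vecMul (Matrix.vecMul a T) U = Matrix.vecMul (c • (y : Fin m → ℤ)) U := by
            rw [haeq]
          rwa [Matrix.vecMul_vecMul, hU, Matrix.vecMul_one, Matrix.smul_vecMul] at h1
        have hyb : (y : Fin m → ℤ) = Matrix.vecMul b T := by
          have h2 : c • (y : Fin m → ℤ) = c • Matrix.vecMul b T := by
            rw [← haeq, hab, Matrix.smul_vecMul]
          exact smul_right_injective (Fin m → ℤ) hc h2
        exact hrangeM (y : Fin m → ℤ) y.2 b hyb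
    haveI : Module.Finite ℤ ↥Λ := Module.Finite.iff_fg.mpr (IsNoetherian.noetherian Λ)
    obtain ⟨sec, hsec⟩ := Module.projective_lifting_property M'.mkQ LinearMap.id
      (Submodule.mkQ_surjective M')
    have hsecq : ∀ q : ↥Λ ⧸ M', M'.mkQ (sec q) = q := fun q => by
      have := LinearMap.congr_fun hsec q
      simpa using this
    have hsinj : Function.Injective sec := by
      intro q1 q2 h
      rw [← hsecq q1, ← hsecq q2, h]
    set π : ↥Λ →ₗ[ℤ] ↥Λ := sec ∘ₗ M'.mkQ with hπ
    have hπmem : ∀ y : ↥Λ, π y ∈ LinearMap.range sec := fun y => ⟨M'.mkQ y, rfl⟩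
    set f : ↥Λ →ₗ[ℤ] ↥(LinearMap.range sec) := π.codRestrict (LinearMap.range sec) hπmem with hf
    have hproj : ∀ x : ↥(LinearMap.range sec), f ↑x = x := by
      rintro ⟨_, q, rfl⟩
      apply Subtype.ext
      show π (sec q) = sec q
      simp only [hπ, LinearMap.comp_apply, hsecq]
    have hcompl : IsCompl (LinearMap.range sec) (LinearMap.ker f) :=
      LinearMap.isCompl_of_proj hproj
    have hkerf : LinearMap.ker f = M' := by
      ext y
      simp only [hf, LinearMap.mem_ker, LinearMap.codRestrict]
      constructor
      · intro h
        have : π y = 0 := congrArg Subtype.val h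
        have h2 : M'.mkQ y = 0 := by
          apply hsinj
          rw [show sec (M'.mkQ y) = π y from rfl, this, map_zero]
        rwa [Submodule.mkQ_apply, Submodule.Quotient.mk_eq_zero] at h2
      · intro h
        apply Subtype.ext
        show π y = 0
        simp only [hπ, LinearMap.comp_apply, Submodule.mkQ_apply]
        rw [(Submodule.Quotient.mk_eq_zero _).mpr h, map_zero]
    rw [hkerf] at hcompl
    refine ⟨(LinearMap.range sec).map Λ.subtype, ?_, ?_⟩
    · have hMeq : M = M'.map Λ.subtype := by
        rw [hM', Submodule.map_comap_eq, Submodule.range_subtype]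
        exact (inf_eq_right.mpr hML).symm
      have hinf : M' ⊓ LinearMap.range sec = ⊥ := by
        rw [inf_comm]; exact disjoint_iff.mp hcompl.disjoint
      rw [hMeq, ← Submodule.map_inf _ (Submodule.injective_subtype Λ), hinf, Submodule.map_bot]
    · have hMeq : M = M'.map Λ.subtype := by
        rw [hM', Submodule.map_comap_eq, Submodule.range_subtype]
        exact (inf_eq_right.mpr hML).symm
      have hsup : M' ⊔ LinearMap.range sec = ⊤ := by
        rw [sup_comm]; exact codisjoint_iff.mp hcompl.codisjoint
      rw [hMeq, ← Submodule.map_sup, hsup, Submodule.map_top, Submodule.range_subtype]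


end Paper
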